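/- Fix n, m ≥ 1 and let A = ℚ[ℏ][x_{i,j}, y_{i,j} : 1 ≤ i ≤ n, 1 ≤ j ≤ m] with the star product f ⋆ g = Σ_I (ℏ^{|I|}/I!) (∂_y^I f)(∂_x^I g) summed over multi-indices I : Fin n × Fin m → ℕ. Let the hyperoctahedral group W = {±1}^n ⋊ S_n act on A by (t,σ)•x_{i,j} = t_i x_{σ(i),j} and (t,σ)•y_{i,j} = t_i y_{σ(i),j}, and let s_W(f) = (1/(2^n n!)) Σ_{w∈W} w•f. Let a, b, c, d : Fin n × Fin m → ℕ be exponent matrices such that for each i the block total degrees Σ_j (a(i,j)+b(i,j)) and Σ_j (c(i,j)+d(i,j)) are even. Then s_W(x^a y^b) ⋆ s_W(x^c y^d) = (1/n!) Σ_{σ∈S_n} Σ_{I} ( ∏_{i,j} C(b(i,j), I(i,j)) · (σ(c)(i,j))_{I(i,j)} ) · ℏ^{|I|} · s_W( x^{a+σ(c)−I} y^{b+σ(d)−I} ), the inner sum over multi-indices I with I ≤ b and I ≤ σ(c) componentwise. -/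

import Mathlib

open Finset MvPolynomial

/-- Variable index set: `((i,j), false)` is `x_{i,j}` and `((i,j), true)` is `y_{i,j}`. -/
abbrev Var14 (n m : ℕ) := (Fin n × Fin m) × Bool

/-- The algebra `A = ℚ[ℏ][x_{i,j}, y_{i,j}]`, with `ℏ = Polynomial.X` in the base ring. -/
abbrev Alg14 (n m : ℕ) := MvPolynomial (Var14 n m) (Polynomial ℚ)

/-- The iterated partial derivative `∂^I` with respect to the `x`-variables
(if `isY = false`) or the `y`-variables (if `isY = true`). -/
noncomputable def derMulti14 (n m : ℕ) (isY : Bool) (I : Fin n × Fin m → ℕ) :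
    Module.End (Polynomial ℚ) (Alg14 n m) :=
  ((Finset.univ : Finset (Fin n × Fin m)).toList).foldr
    (fun p F => ((pderiv ((p, isY) : Var14 n m)).toLinearMap ^ I p) * F) 1

/-- The star product `f ⋆ g = Σ_I (ℏ^{|I|}/I!) (∂_y^I f)(∂_x^I g)`; the (finitely
supported) sum over all multi-indices `I` is realized as a sum over
`I : Fin n × Fin m → Fin (totalDegree f + 1)`, all other terms being zero. -/
noncomputable def star14 (n m : ℕ) (f g : Alg14 n m) : Alg14 n m :=
  ∑ I : Fin n × Fin m → Fin (f.totalDegree + 1),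
    (Polynomial.C (((∏ p : Fin n × Fin m, Nat.factorial (I p) : ℕ) : ℚ))⁻¹ *
        Polynomial.X ^ (∑ p : Fin n × Fin m, (I p : ℕ))) •
      (derMulti14 n m true (fun p => I p) f * derMulti14 n m false (fun p => I p) g)

/-- The action of `(t,σ)` in the hyperoctahedral group `W = {±1}^n ⋊ S_n`:
`(t,σ) • x_{i,j} = t_i x_{σ(i),j}` and `(t,σ) • y_{i,j} = t_i y_{σ(i),j}`.
A sign vector `t ∈ {±1}^n` is encoded as `t : Fin n → Bool` with `true ↦ -1`, `false ↦ 1`. -/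
noncomputable def actW14 (n m : ℕ) (t : Fin n → Bool) (σ : Equiv.Perm (Fin n)) :
    Alg14 n m → Alg14 n m :=
  aeval (fun v : Var14 n m =>
    C (Polynomial.C (if t v.1.1 then (-1 : ℚ) else 1)) * X (((σ v.1.1, v.1.2), v.2) : Var14 n m))

/-- The averaging `s_W(f) = (1/(2^n n!)) Σ_{w ∈ W} w • f` over `W = {±1}^n ⋊ S_n`. -/
noncomputable def symW14 (n m : ℕ) (f : Alg14 n m) : Alg14 n m :=
  Polynomial.C ((2 ^ n * n.factorial : ℚ))⁻¹ •
    ∑ t : Fin n → Bool, ∑ σ : Equiv.Perm (Fin n), actW14 n m t σ f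

/-- The monomial `x^a y^b = ∏_{i,j} x_{i,j}^{a(i,j)} y_{i,j}^{b(i,j)}`. -/
noncomputable def xy14 (n m : ℕ) (a b : Fin n × Fin m → ℕ) : Alg14 n m :=
  ∏ p : Fin n × Fin m, (X ((p, false) : Var14 n m) ^ a p * X ((p, true) : Var14 n m) ^ b p)

namespace Aux14
variable (n m : ℕ)

/-- exponent finsupp from two exponent matrices -/
noncomputable def toE (a b : Fin n × Fin m → ℕ) : Var14 n m →₀ ℕ :=
  Finsupp.equivFunOnFinite.symm (fun v => bif v.2 then b v.1 else a v.1)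

@[simp] lemma toE_apply (a b : Fin n × Fin m → ℕ) (v : Var14 n m) :
    toE n m a b v = bif v.2 then b v.1 else a v.1 := rfl

lemma toE_eq_sum (a b : Fin n × Fin m → ℕ) :
    toE n m a b = ∑ p : Fin n × Fin m,
      (Finsupp.single ((p, false) : Var14 n m) (a p)
        + Finsupp.single ((p, true) : Var14 n m) (b p)) := by
  ext v
  rw [Finsupp.finset_sum_apply]
  rw [Finset.sum_eq_single v.1]
  · rcases v with ⟨q, (_|_)⟩ <;>
      simp [Finsupp.single_apply, Prod.ext_iff]
  · intro p _ hp
    rcases v with ⟨q, s⟩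
    simp only [Finsupp.add_apply, Finsupp.single_apply]
    rw [if_neg (fun h => hp (congrArg Prod.fst h)), if_neg (fun h => hp (congrArg Prod.fst h))]
    simp
  · simp

lemma prod_monomial {ι : Type*} (s : Finset ι) (e : ι → (Var14 n m →₀ ℕ)) :
    (∏ i ∈ s, (monomial (e i) (1 : Polynomial ℚ))) = monomial (∑ i ∈ s, e i) 1 := by
  classical
  induction s using Finset.induction with
  | empty => simp
  | @insert a s h ih => rw [Finset.prod_insert h, Finset.sum_insert h, ih, monomial_mul, one_mul]

lemma xy_eq (a b : Fin n × Fin m → ℕ) :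
    xy14 n m a b = monomial (toE n m a b) 1 := by
  rw [xy14, toE_eq_sum, ← prod_monomial]
  refine Finset.prod_congr rfl fun p _ => ?_
  rw [X_pow_eq_monomial, X_pow_eq_monomial, monomial_mul, one_mul]


lemma pd_pow_monomial (v : Var14 n m) (k : ℕ) (E : Var14 n m →₀ ℕ) (c : Polynomial ℚ) :
    (((pderiv v).toLinearMap ^ k) (monomial E c) : Alg14 n m)
      = monomial (E - Finsupp.single v k) (c * ((E v).descFactorial k : ℕ)) := by
  induction k with
  | zero => simp
  | succ k ih =>
    rw [pow_succ', Module.End.mul_apply, ih]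
    rw [Derivation.coeFn_coe, pderiv_monomial]
    have hE : E - Finsupp.single v k - Finsupp.single v 1 = E - Finsupp.single v (k+1) := by
      ext w
      simp only [Finsupp.tsub_apply, Finsupp.single_apply]
      by_cases h : v = w
      · subst h; simp [Nat.sub_sub]
      · simp [h]
    have hv : (E - Finsupp.single v k) v = E v - k := by
      rw [Finsupp.tsub_apply, Finsupp.single_eq_same]
    rw [hE, hv, Nat.descFactorial_succ]
    refine congrArg _ ?_
    push_cast
    ring

lemma derMulti_list_monomial (isY : Bool) (I : Fin n × Fin m → ℕ)
    (l : List (Fin n × Fin m)) (hl : l.Nodup) (a b : Fin n × Fin m → ℕ) (c : Polynomial ℚ) :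
    ((l.foldr (fun p F => ((pderiv ((p, isY) : Var14 n m)).toLinearMap ^ I p) * F) 1 :
        Module.End (Polynomial ℚ) (Alg14 n m)) (monomial (toE n m a b) c))
      = monomial
          (toE n m (fun q => if ¬isY ∧ q ∈ l then a q - I q else a q)
                   (fun q => if isY ∧ q ∈ l then b q - I q else b q))
          (c * ((∏ q ∈ l.toFinset, ((bif isY then b q else a q).descFactorial (I q)) : ℕ))) := by
  induction l with
  | nil => simp
  | cons p l ih =>
    have hp : p ∉ l := (List.nodup_cons.mp hl).1
    have hl' : l.Nodup := (List.nodup_cons.mp hl).2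
    rw [List.foldr_cons, Module.End.mul_apply, ih hl', pd_pow_monomial]
    have hEsub : toE n m (fun q => if ¬isY ∧ q ∈ l then a q - I q else a q)
                   (fun q => if isY ∧ q ∈ l then b q - I q else b q)
          - Finsupp.single ((p, isY) : Var14 n m) (I p)
        = toE n m (fun q => if ¬isY ∧ q ∈ p :: l then a q - I q else a q)
                  (fun q => if isY ∧ q ∈ p :: l then b q - I q else b q) := by
      ext w
      simp only [Finsupp.tsub_apply, Finsupp.single_apply, toE_apply]
      rcases w with ⟨q, s⟩
      by_cases hqp : q = p
      · subst hqp
        by_cases hs : s = isY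
        · subst hs
          cases s <;> simp [hp, List.mem_cons]
        · have : ((q, isY) : Var14 n m) ≠ (q, s) := by simp [Ne.symm hs]
          rw [if_neg this]
          cases s <;> cases isY <;> simp_all [List.mem_cons]
      · have : ((p, isY) : Var14 n m) ≠ (q, s) := by simp [Ne.symm hqp]
        rw [if_neg this]
        cases s <;> simp [List.mem_cons, hqp]
    rw [hEsub]
    congr 1
    have hval : (toE n m (fun q => if ¬isY ∧ q ∈ l then a q - I q else a q)
                   (fun q => if isY ∧ q ∈ l then b q - I q else b q)) ((p, isY) : Var14 n m)
        = bif isY then b p else a p := by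
      cases isY <;> simp [hp]
    rw [hval]
    rw [List.toFinset_cons, Finset.prod_insert (by simpa using hp)]
    push_cast
    ring

lemma derMulti_monomial (isY : Bool) (I : Fin n × Fin m → ℕ)
    (a b : Fin n × Fin m → ℕ) (c : Polynomial ℚ) :
    derMulti14 n m isY I (monomial (toE n m a b) c)
      = monomial (toE n m (if isY then a else a - I) (if isY then b - I else b))
          (c * ((∏ q : Fin n × Fin m, ((bif isY then b q else a q).descFactorial (I q)) : ℕ))) := by
  rw [derMulti14, derMulti_list_monomial n m isY I _ (Finset.nodup_toList _)]
  have h1 : (fun q => if ¬isY = true ∧ q ∈ Finset.univ.toList then a q - I q else a q)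
      = (if isY = true then a else a - I) := by
    funext q
    have hq : q ∈ Finset.univ.toList := by simp [Finset.mem_toList]
    cases isY <;> simp [hq, Pi.sub_apply]
  have h2 : (fun q => if isY = true ∧ q ∈ Finset.univ.toList then b q - I q else b q)
      = (if isY = true then b - I else b) := by
    funext q
    have hq : q ∈ Finset.univ.toList := by simp [Finset.mem_toList]
    cases isY <;> simp [hq, Pi.sub_apply]
  rw [h1, h2, Finset.toList_toFinset]


/-- the permutation action on exponent matrices -/
def pa (σ : Equiv.Perm (Fin n)) (a : Fin n × Fin m → ℕ) : Fin n × Fin m → ℕ :=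
  fun p => a (σ⁻¹ p.1, p.2)

lemma actW_xy (t : Fin n → Bool) (σ : Equiv.Perm (Fin n)) (a b : Fin n × Fin m → ℕ)
    (hab : ∀ i : Fin n, Even (∑ j : Fin m, (a (i, j) + b (i, j)))) :
    actW14 n m t σ (xy14 n m a b) = xy14 n m (pa n m σ a) (pa n m σ b) := by
  rw [actW14, xy14, map_prod]
  have step : ∀ p : Fin n × Fin m,
      (aeval (fun v : Var14 n m =>
        C (Polynomial.C (if t v.1.1 then (-1 : ℚ) else 1)) * X (((σ v.1.1, v.1.2), v.2) : Var14 n m)))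
        ((X ((p, false) : Var14 n m) ^ a p * X ((p, true) : Var14 n m) ^ b p : Alg14 n m))
      = (C (Polynomial.C (if t p.1 then (-1 : ℚ) else 1)) ^ (a p + b p)) *
          (X (((σ p.1, p.2), false) : Var14 n m) ^ a p * X (((σ p.1, p.2), true) : Var14 n m) ^ b p) := by
    intro p
    rw [map_mul, map_pow, map_pow, aeval_X, aeval_X]
    rw [mul_pow, mul_pow, pow_add]
    ring
  rw [Finset.prod_congr rfl (fun p _ => step p)]
  have hsplit : (∏ p : Fin n × Fin m,
      ((C (Polynomial.C (if t p.1 then (-1 : ℚ) else 1)) ^ (a p + b p) : Alg14 n m) *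
        (X (((σ p.1, p.2), false) : Var14 n m) ^ a p * X (((σ p.1, p.2), true) : Var14 n m) ^ b p)))
      = (∏ p : Fin n × Fin m, (C (Polynomial.C (if t p.1 then (-1 : ℚ) else 1)) ^ (a p + b p) : Alg14 n m)) *
        ∏ p : Fin n × Fin m, (X (((σ p.1, p.2), false) : Var14 n m) ^ a p * X (((σ p.1, p.2), true) : Var14 n m) ^ b p) :=
    Finset.prod_mul_distrib
  rw [hsplit]
  have hsign : (∏ p : Fin n × Fin m,
      (C (Polynomial.C (if t p.1 then (-1 : ℚ) else 1)) ^ (a p + b p) : Alg14 n m)) = 1 := by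
    rw [Fintype.prod_prod_type]
    refine Finset.prod_eq_one fun i _ => ?_
    show (∏ j : Fin m, (C (Polynomial.C (if t i then (-1 : ℚ) else 1)) : Alg14 n m) ^ (a (i, j) + b (i, j))) = 1
    rw [Finset.prod_pow_eq_pow_sum]
    cases ht : t i
    · simp
    · simp only [if_true]
      rw [← map_pow, ← map_pow]
      rw [(hab i).neg_one_pow]
      simp
  rw [hsign, one_mul]
  rw [xy14]
  refine Fintype.prod_equiv (Equiv.prodCongr σ (Equiv.refl (Fin m))) _ _ fun p => ?_
  rcases p with ⟨i, j⟩
  simp [pa, Equiv.prodCongr]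

lemma symW_xy (a b : Fin n × Fin m → ℕ)
    (hab : ∀ i : Fin n, Even (∑ j : Fin m, (a (i, j) + b (i, j)))) :
    symW14 n m (xy14 n m a b)
      = Polynomial.C ((n.factorial : ℚ))⁻¹ •
          ∑ σ : Equiv.Perm (Fin n), xy14 n m (pa n m σ a) (pa n m σ b) := by
  rw [symW14]
  rw [Finset.sum_congr rfl (fun t _ => Finset.sum_congr rfl
    (fun σ _ => actW_xy n m t σ a b hab))]
  rw [Finset.sum_const]
  have hcard : (Finset.univ : Finset (Fin n → Bool)).card = 2 ^ n := by
    simp [Fintype.card_fun]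
  rw [hcard]
  rw [← Nat.cast_smul_eq_nsmul (Polynomial ℚ), smul_smul]
  congr 1
  rw [← Polynomial.C_eq_natCast, ← map_mul]
  congr 1
  have h2 : ((2 ^ n : ℕ) : ℚ) ≠ 0 := by positivity
  have hf : (n.factorial : ℚ) ≠ 0 := Nat.cast_ne_zero.mpr n.factorial_ne_zero
  field_simp
  norm_num


lemma toE_proj (v : Var14 n m →₀ ℕ) :
    toE n m (fun p => v ((p, false) : Var14 n m)) (fun p => v ((p, true) : Var14 n m)) = v := by
  ext w
  rcases w with ⟨q, (_|_)⟩ <;> simp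

lemma apply_le_degSum (v : Var14 n m →₀ ℕ) (w : Var14 n m) :
    v w ≤ v.sum fun _ e => e := by
  by_cases h : v w = 0
  · simp [h]
  · exact Finset.single_le_sum (fun _ _ => Nat.zero_le _) (Finsupp.mem_support_iff.mpr h)

/-- the star-product summand -/
noncomputable def sTerm (f g : Alg14 n m) (J : Fin n × Fin m → ℕ) : Alg14 n m :=
  (Polynomial.C (((∏ p : Fin n × Fin m, Nat.factorial (J p) : ℕ) : ℚ))⁻¹ *
      Polynomial.X ^ (∑ p : Fin n × Fin m, J p)) •
    (derMulti14 n m true J f * derMulti14 n m false J g)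

lemma derMulti_vanish (f : Alg14 n m) (J : Fin n × Fin m → ℕ)
    (h : ∃ p, f.totalDegree < J p) : derMulti14 n m true J f = 0 := by
  obtain ⟨p, hp⟩ := h
  conv_lhs => rw [f.as_sum]
  rw [map_sum]
  refine Finset.sum_eq_zero fun v hv => ?_
  rw [← toE_proj n m v, derMulti_monomial]
  have hzero : (∏ q : Fin n × Fin m,
      (bif true then v ((q, true) : Var14 n m) else v ((q, false) : Var14 n m)).descFactorial
        (J q)) = 0 := by
    refine Finset.prod_eq_zero (Finset.mem_univ p) ?_
    refine Nat.descFactorial_eq_zero_iff_lt.mpr ?_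
    show v ((p, true) : Var14 n m) < J p
    calc v ((p, true) : Var14 n m) ≤ v.sum fun _ e => e := apply_le_degSum n m v _
    _ ≤ f.totalDegree := le_totalDegree hv
    _ < J p := hp
  rw [hzero]
  simp

lemma star_eq_box (f g : Alg14 n m) (N : ℕ) (hN : f.totalDegree ≤ N) :
    star14 n m f g
      = ∑ J ∈ Fintype.piFinset (fun _ : Fin n × Fin m => Finset.range (N + 1)),
          sTerm n m f g J := by
  rw [star14]
  have h1 : (∑ I : Fin n × Fin m → Fin (f.totalDegree + 1),
        sTerm n m f g (fun p => (I p : ℕ)))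
      = ∑ J ∈ Fintype.piFinset (fun _ : Fin n × Fin m => Finset.range (f.totalDegree + 1)),
          sTerm n m f g J := by
    refine Finset.sum_bij' (fun I _ => fun p => (I p : ℕ))
      (fun J hJ => fun p => (⟨J p, by
        have := (Fintype.mem_piFinset.mp hJ) p
        simpa using this⟩ : Fin (f.totalDegree + 1)))
      ?_ ?_ ?_ ?_ ?_
    · intro I _
      refine Fintype.mem_piFinset.mpr fun p => ?_
      simpa using (I p).isLt
    · intro J hJ; exact Finset.mem_univ _
    · intro I _; funext p; rfl
    · intro J hJ; funext p; rfl
    · intro I _; rfl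
  rw [show (∑ I : Fin n × Fin m → Fin (f.totalDegree + 1),
      (Polynomial.C (((∏ p : Fin n × Fin m, Nat.factorial (I p) : ℕ) : ℚ))⁻¹ *
        Polynomial.X ^ (∑ p : Fin n × Fin m, (I p : ℕ))) •
      (derMulti14 n m true (fun p => I p) f * derMulti14 n m false (fun p => I p) g))
      = ∑ I : Fin n × Fin m → Fin (f.totalDegree + 1), sTerm n m f g (fun p => (I p : ℕ))
      from rfl]
  rw [h1]
  refine Finset.sum_subset ?_ ?_
  · intro J hJ
    refine Fintype.mem_piFinset.mpr fun p => ?_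
    have := (Fintype.mem_piFinset.mp hJ) p
    simp only [Finset.mem_range] at this ⊢
    omega
  · intro J hJ hJ'
    have : ∃ p, f.totalDegree < J p := by
      by_contra hc
      push_neg at hc
      exact hJ' (Fintype.mem_piFinset.mpr fun p => Finset.mem_range.mpr (by
        have := hc p; omega))
    rw [sTerm, derMulti_vanish n m f J this]
    simp


lemma toE_sum (a b : Fin n × Fin m → ℕ) :
    ((toE n m a b).sum fun _ e => e) = ∑ p : Fin n × Fin m, (a p + b p) := by
  rw [Finsupp.sum_fintype _ _ (fun _ => rfl)]
  rw [Fintype.sum_prod_type]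
  refine Finset.sum_congr rfl fun p _ => ?_
  rw [Fintype.sum_bool]
  simp [add_comm]

lemma sum_pa (σ : Equiv.Perm (Fin n)) (e : Fin n × Fin m → ℕ) :
    (∑ p : Fin n × Fin m, pa n m σ e p) = ∑ p : Fin n × Fin m, e p := by
  refine (Fintype.sum_equiv (Equiv.prodCongr σ (Equiv.refl (Fin m))) _ _ fun q => ?_).symm
  simp [pa, Equiv.prodCongr]

lemma tdeg_symW_le (a b : Fin n × Fin m → ℕ)
    (hab : ∀ i : Fin n, Even (∑ j : Fin m, (a (i, j) + b (i, j)))) :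
    (symW14 n m (xy14 n m a b)).totalDegree ≤ ∑ p : Fin n × Fin m, (a p + b p) := by
  rw [symW_xy n m a b hab]
  refine (totalDegree_smul_le _ _).trans ?_
  refine totalDegree_finsetSum_le fun σ _ => ?_
  rw [xy_eq]
  refine (totalDegree_monomial_le _ _).trans ?_
  rw [show ((toE n m (pa n m σ a) (pa n m σ b)).sum fun _ e => id e)
      = ((toE n m (pa n m σ a) (pa n m σ b)).sum fun _ e => e) from rfl]
  rw [toE_sum]
  rw [show (∑ p : Fin n × Fin m, (pa n m σ a p + pa n m σ b p))
      = ∑ p : Fin n × Fin m, pa n m σ (fun q => a q + b q) p from rfl]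
  rw [sum_pa]

lemma derMulti_symW_y (a b : Fin n × Fin m → ℕ)
    (hab : ∀ i : Fin n, Even (∑ j : Fin m, (a (i, j) + b (i, j)))) (J : Fin n × Fin m → ℕ) :
    derMulti14 n m true J (symW14 n m (xy14 n m a b))
      = Polynomial.C ((n.factorial : ℚ))⁻¹ •
          ∑ σ : Equiv.Perm (Fin n),
            monomial (toE n m (pa n m σ a) (pa n m σ b - J))
              ((∏ q : Fin n × Fin m, ((pa n m σ b) q).descFactorial (J q) : ℕ) : Polynomial ℚ) := by
  rw [symW_xy n m a b hab, map_smul, map_sum]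
  refine congrArg _ (Finset.sum_congr rfl fun σ _ => ?_)
  rw [xy_eq, derMulti_monomial]
  simp

lemma derMulti_symW_x (c d : Fin n × Fin m → ℕ)
    (hcd : ∀ i : Fin n, Even (∑ j : Fin m, (c (i, j) + d (i, j)))) (J : Fin n × Fin m → ℕ) :
    derMulti14 n m false J (symW14 n m (xy14 n m c d))
      = Polynomial.C ((n.factorial : ℚ))⁻¹ •
          ∑ τ : Equiv.Perm (Fin n),
            monomial (toE n m (pa n m τ c - J) (pa n m τ d))
              ((∏ q : Fin n × Fin m, ((pa n m τ c) q).descFactorial (J q) : ℕ) : Polynomial ℚ) := by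
  rw [symW_xy n m c d hcd, map_smul, map_sum]
  refine congrArg _ (Finset.sum_congr rfl fun τ _ => ?_)
  rw [xy_eq, derMulti_monomial]
  simp


/-- The common summand. -/
noncomputable def FF (a b c d : Fin n × Fin m → ℕ) (σ τ : Equiv.Perm (Fin n))
    (J : Fin n × Fin m → ℕ) : Alg14 n m :=
  (Polynomial.C (((∏ p : Fin n × Fin m, Nat.factorial (J p) : ℕ) : ℚ))⁻¹ *
      ((∏ p : Fin n × Fin m,
          ((pa n m σ b) p).descFactorial (J p) * ((pa n m τ c) p).descFactorial (J p) : ℕ) :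
        Polynomial ℚ) *
      Polynomial.X ^ (∑ p : Fin n × Fin m, J p)) •
    monomial (toE n m (pa n m σ a + pa n m τ c - J) (pa n m σ b + pa n m τ d - J))
      (1 : Polynomial ℚ)

lemma FF_term_eq (a b c d : Fin n × Fin m → ℕ) (σ τ : Equiv.Perm (Fin n))
    (J : Fin n × Fin m → ℕ) :
    (Polynomial.C (((∏ p : Fin n × Fin m, Nat.factorial (J p) : ℕ) : ℚ))⁻¹ *
        Polynomial.X ^ (∑ p : Fin n × Fin m, J p)) •
      (monomial (toE n m (pa n m σ a) (pa n m σ b - J))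
          ((∏ q : Fin n × Fin m, ((pa n m σ b) q).descFactorial (J q) : ℕ) : Polynomial ℚ) *
        monomial (toE n m (pa n m τ c - J) (pa n m τ d))
          ((∏ q : Fin n × Fin m, ((pa n m τ c) q).descFactorial (J q) : ℕ) : Polynomial ℚ))
      = FF n m a b c d σ τ J := by
  rw [monomial_mul, FF]
  by_cases hJ : (∀ p, J p ≤ pa n m σ b p) ∧ (∀ p, J p ≤ pa n m τ c p)
  · have hE : toE n m (pa n m σ a) (pa n m σ b - J) + toE n m (pa n m τ c - J) (pa n m τ d)
        = toE n m (pa n m σ a + pa n m τ c - J) (pa n m σ b + pa n m τ d - J) := by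
      ext w
      rcases w with ⟨q, (_|_)⟩ <;>
        (simp only [Finsupp.add_apply, toE_apply, cond_false, cond_true, Pi.sub_apply,
          Pi.add_apply]
         have h1 := hJ.1 q; have h2 := hJ.2 q; omega)
    rw [hE, smul_monomial, smul_monomial]
    congr 1
    rw [Finset.prod_mul_distrib]
    push_cast
    simp only [smul_eq_mul]
    ring
  · -- some descFactorial vanishes on both sides
    push_neg at hJ
    have h0' : (∏ p : Fin n × Fin m,
        ((pa n m σ b) p).descFactorial (J p) * ((pa n m τ c) p).descFactorial (J p) : ℕ) = 0 := by
      by_cases h1 : ∀ p, J p ≤ pa n m σ b p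
      · obtain ⟨p, hp⟩ := hJ h1
        exact Finset.prod_eq_zero (Finset.mem_univ p)
          (by rw [Nat.descFactorial_eq_zero_iff_lt.mpr (by omega : pa n m τ c p < J p)]; ring)
      · push_neg at h1
        obtain ⟨p, hp⟩ := h1
        exact Finset.prod_eq_zero (Finset.mem_univ p)
          (by rw [Nat.descFactorial_eq_zero_iff_lt.mpr (by omega : pa n m σ b p < J p)]; ring)
    have h0 : ((∏ q : Fin n × Fin m, ((pa n m σ b) q).descFactorial (J q) : ℕ) : Polynomial ℚ) *
        ((∏ q : Fin n × Fin m, ((pa n m τ c) q).descFactorial (J q) : ℕ) : Polynomial ℚ) = 0 := by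
      rw [← Nat.cast_mul, ← Finset.prod_mul_distrib, h0', Nat.cast_zero]
    rw [h0, h0']
    simp

lemma lhs_eq (a b c d : Fin n × Fin m → ℕ)
    (hab : ∀ i : Fin n, Even (∑ j : Fin m, (a (i, j) + b (i, j))))
    (hcd : ∀ i : Fin n, Even (∑ j : Fin m, (c (i, j) + d (i, j)))) :
    star14 n m (symW14 n m (xy14 n m a b)) (symW14 n m (xy14 n m c d))
      = (Polynomial.C ((n.factorial : ℚ))⁻¹ * Polynomial.C ((n.factorial : ℚ))⁻¹) •
          ∑ σ : Equiv.Perm (Fin n), ∑ τ : Equiv.Perm (Fin n),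
            ∑ J ∈ Fintype.piFinset
                (fun _ : Fin n × Fin m => Finset.range (∑ p : Fin n × Fin m, (a p + b p) + 1)),
              FF n m a b c d σ τ J := by
  rw [star_eq_box n m _ _ _ (tdeg_symW_le n m a b hab)]
  have hterm : ∀ J, sTerm n m (symW14 n m (xy14 n m a b)) (symW14 n m (xy14 n m c d)) J
      = (Polynomial.C ((n.factorial : ℚ))⁻¹ * Polynomial.C ((n.factorial : ℚ))⁻¹) •
          ∑ σ : Equiv.Perm (Fin n), ∑ τ : Equiv.Perm (Fin n), FF n m a b c d σ τ J := by
    intro J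
    rw [sTerm, derMulti_symW_y n m a b hab J, derMulti_symW_x n m c d hcd J]
    rw [smul_mul_smul]
    rw [Finset.sum_mul_sum]
    rw [smul_comm]
    refine congrArg _ ?_
    rw [Finset.smul_sum]
    refine Finset.sum_congr rfl fun σ _ => ?_
    rw [Finset.smul_sum]
    refine Finset.sum_congr rfl fun τ _ => ?_
    exact FF_term_eq n m a b c d σ τ J
  rw [Finset.sum_congr rfl fun J _ => hterm J]
  rw [← Finset.smul_sum, Finset.sum_comm]
  refine congrArg _ (Finset.sum_congr rfl fun σ _ => Finset.sum_comm)


lemma pa_comp (ρ σ' : Equiv.Perm (Fin n)) (e : Fin n × Fin m → ℕ) :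
    pa n m ρ (pa n m σ' e) = pa n m (ρ * σ') e := by
  funext q
  simp [pa, mul_inv_rev, Equiv.Perm.mul_apply]

lemma FF_zero (a b c d : Fin n × Fin m → ℕ) (σ τ : Equiv.Perm (Fin n)) (J : Fin n × Fin m → ℕ)
    (h : ∃ p, pa n m σ b p < J p ∨ pa n m τ c p < J p) : FF n m a b c d σ τ J = 0 := by
  obtain ⟨p, hp⟩ := h
  rw [FF]
  have h0 : (∏ p : Fin n × Fin m,
      ((pa n m σ b) p).descFactorial (J p) * ((pa n m τ c) p).descFactorial (J p) : ℕ) = 0 := by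
    refine Finset.prod_eq_zero (Finset.mem_univ p) ?_
    rcases hp with hp | hp
    · rw [Nat.descFactorial_eq_zero_iff_lt.mpr hp]; ring
    · rw [Nat.descFactorial_eq_zero_iff_lt.mpr hp]; ring
  rw [h0]
  simp

lemma rhs_term (a b c d : Fin n × Fin m → ℕ) (σ' ρ : Equiv.Perm (Fin n))
    (K : Fin n × Fin m → ℕ) :
    (((∏ p : Fin n × Fin m, (b p).choose (K p) * ((pa n m σ' c) p).descFactorial (K p) : ℕ) :
        Polynomial ℚ) * Polynomial.X ^ (∑ p : Fin n × Fin m, K p)) •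
      monomial (toE n m (pa n m ρ (fun p => a p + pa n m σ' c p - K p))
                        (pa n m ρ (fun p => b p + pa n m σ' d p - K p))) (1 : Polynomial ℚ)
      = FF n m a b c d ρ (ρ * σ') (pa n m ρ K) := by
  rw [FF]
  have hE : toE n m (pa n m ρ (fun p => a p + pa n m σ' c p - K p))
        (pa n m ρ (fun p => b p + pa n m σ' d p - K p))
      = toE n m (pa n m ρ a + pa n m (ρ * σ') c - pa n m ρ K)
          (pa n m ρ b + pa n m (ρ * σ') d - pa n m ρ K) := by
    have h1 : pa n m ρ (fun p => a p + pa n m σ' c p - K p)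
        = pa n m ρ a + pa n m (ρ * σ') c - pa n m ρ K := by
      funext q
      simp [pa, mul_inv_rev, Equiv.Perm.mul_apply]
    have h2 : pa n m ρ (fun p => b p + pa n m σ' d p - K p)
        = pa n m ρ b + pa n m (ρ * σ') d - pa n m ρ K := by
      funext q
      simp [pa, mul_inv_rev, Equiv.Perm.mul_apply]
    rw [h1, h2]
  rw [hE]
  congr 1
  -- scalar equality
  have r1 : (∏ p : Fin n × Fin m, Nat.factorial (pa n m ρ K p))
      = ∏ p : Fin n × Fin m, Nat.factorial (K p) := by
    refine (Fintype.prod_equiv (Equiv.prodCongr ρ (Equiv.refl (Fin m))) _ _ fun q => ?_).symm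
    simp [pa, Equiv.prodCongr]
  have r2 : (∏ p : Fin n × Fin m,
        ((pa n m ρ b) p).descFactorial ((pa n m ρ K) p) *
          ((pa n m (ρ * σ') c) p).descFactorial ((pa n m ρ K) p))
      = ∏ q : Fin n × Fin m,
          (b q).descFactorial (K q) * ((pa n m σ' c) q).descFactorial (K q) := by
    refine (Fintype.prod_equiv (Equiv.prodCongr ρ (Equiv.refl (Fin m))) _ _ fun q => ?_).symm
    simp [pa, Equiv.prodCongr, mul_inv_rev, Equiv.Perm.mul_apply]
  have r3 : (∑ p : Fin n × Fin m, pa n m ρ K p) = ∑ p : Fin n × Fin m, K p := sum_pa n m ρ K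
  rw [r1, r2, r3]
  have hdf : (∏ q : Fin n × Fin m,
        (b q).descFactorial (K q) * ((pa n m σ' c) q).descFactorial (K q))
      = (∏ q : Fin n × Fin m, Nat.factorial (K q)) *
          ∏ q : Fin n × Fin m, (b q).choose (K q) * ((pa n m σ' c) q).descFactorial (K q) := by
    rw [← Finset.prod_mul_distrib]
    refine Finset.prod_congr rfl fun q _ => ?_
    rw [Nat.descFactorial_eq_factorial_mul_choose]
    ring
  rw [hdf]
  push_cast
  rw [← mul_assoc]
  congr 1
  have h1 : (∏ i : Fin n × Fin m, (((K i).factorial : ℕ) : Polynomial ℚ))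
      = Polynomial.C (∏ i : Fin n × Fin m, (((K i).factorial : ℕ) : ℚ)) := by
    rw [map_prod]
    exact Finset.prod_congr rfl fun i _ => (Polynomial.C_eq_natCast _).symm
  have hfne : (∏ i : Fin n × Fin m, (((K i).factorial : ℕ) : ℚ)) ≠ 0 := by
    positivity
  rw [h1, ← map_mul, inv_mul_cancel₀ hfne, map_one, one_mul]


lemma rhs_inner (a b c d : Fin n × Fin m → ℕ)
    (hab : ∀ i : Fin n, Even (∑ j : Fin m, (a (i, j) + b (i, j))))
    (hcd : ∀ i : Fin n, Even (∑ j : Fin m, (c (i, j) + d (i, j))))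
    (σ : Equiv.Perm (Fin n)) (I : (p : Fin n × Fin m) → Fin (b p + 1))
    (hI : ∀ p : Fin n × Fin m, (I p : ℕ) ≤ c (σ⁻¹ p.1, p.2)) :
    (((∏ p : Fin n × Fin m,
          (b p).choose (I p) * (c (σ⁻¹ p.1, p.2)).descFactorial (I p) : ℕ) :
        Polynomial ℚ) *
      Polynomial.X ^ (∑ p : Fin n × Fin m, (I p : ℕ))) •
      symW14 n m (xy14 n m
        (fun p => a p + c (σ⁻¹ p.1, p.2) - (I p : ℕ))
        (fun p => b p + d (σ⁻¹ p.1, p.2) - (I p : ℕ)))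
      = Polynomial.C ((n.factorial : ℚ))⁻¹ •
          ∑ ρ : Equiv.Perm (Fin n),
            FF n m a b c d ρ (ρ * σ) (pa n m ρ (fun p => (I p : ℕ))) := by
  have heven : ∀ i : Fin n, Even (∑ j : Fin m,
      ((fun p => a p + c (σ⁻¹ p.1, p.2) - (I p : ℕ)) (i, j) +
        (fun p => b p + d (σ⁻¹ p.1, p.2) - (I p : ℕ)) (i, j))) := by
    intro i
    have hkey : (∑ j : Fin m,
          ((a (i, j) + c (σ⁻¹ i, j) - (I (i, j) : ℕ)) +
            (b (i, j) + d (σ⁻¹ i, j) - (I (i, j) : ℕ)))) + 2 * (∑ j : Fin m, (I (i, j) : ℕ))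
        = (∑ j : Fin m, (a (i, j) + b (i, j))) +
            (∑ j : Fin m, (c (σ⁻¹ i, j) + d (σ⁻¹ i, j))) := by
      rw [Finset.mul_sum, ← Finset.sum_add_distrib, ← Finset.sum_add_distrib]
      refine Finset.sum_congr rfl fun j _ => ?_
      have h1 : (I (i, j) : ℕ) ≤ b (i, j) := Nat.lt_succ_iff.mp (I (i, j)).isLt
      have h2 : (I (i, j) : ℕ) ≤ c (σ⁻¹ i, j) := hI (i, j)
      omega
    obtain ⟨k, hk⟩ := (hab i).add (hcd (σ⁻¹ i))
    show Even (∑ j : Fin m,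
      ((a (i, j) + c (σ⁻¹ i, j) - (I (i, j) : ℕ)) +
        (b (i, j) + d (σ⁻¹ i, j) - (I (i, j) : ℕ))))
    exact ⟨k - (∑ j : Fin m, (I (i, j) : ℕ)), by omega⟩
  rw [symW_xy n m _ _ heven]
  rw [smul_comm, Finset.smul_sum]
  refine congrArg _ (Finset.sum_congr rfl fun ρ _ => ?_)
  rw [xy_eq]
  exact rhs_term n m a b c d σ ρ (fun p => (I p : ℕ))


lemma inner_reindex (a b c d : Fin n × Fin m → ℕ) (ρ τ : Equiv.Perm (Fin n)) :
    (∑ I ∈ Finset.univ.filter (fun I : (p : Fin n × Fin m) → Fin (b p + 1) =>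
        ∀ p : Fin n × Fin m, (I p : ℕ) ≤ c ((ρ⁻¹ * τ)⁻¹ p.1, p.2)),
      FF n m a b c d ρ τ (pa n m ρ (fun p => (I p : ℕ))))
    = ∑ J ∈ Fintype.piFinset
        (fun _ : Fin n × Fin m => Finset.range (∑ p : Fin n × Fin m, (a p + b p) + 1)),
        FF n m a b c d ρ τ J := by
  have hstep : (∑ I ∈ Finset.univ.filter (fun I : (p : Fin n × Fin m) → Fin (b p + 1) =>
        ∀ p : Fin n × Fin m, (I p : ℕ) ≤ c ((ρ⁻¹ * τ)⁻¹ p.1, p.2)),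
      FF n m a b c d ρ τ (pa n m ρ (fun p => (I p : ℕ))))
      = ∑ J ∈ (Fintype.piFinset (fun p : Fin n × Fin m =>
            Finset.range (pa n m ρ b p + 1))).filter
          (fun J => ∀ p : Fin n × Fin m, J p ≤ pa n m τ c p),
          FF n m a b c d ρ τ J := by
    refine Finset.sum_bij' (fun I _ => pa n m ρ (fun p => (I p : ℕ)))
      (fun J hJ => fun p => (⟨J (ρ p.1, p.2), ?_⟩ : Fin (b p + 1)))
      ?_ ?_ ?_ ?_ ?_
    · have h1 := (Fintype.mem_piFinset.mp (Finset.mem_filter.mp hJ).1) (ρ p.1, p.2)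
      rw [Finset.mem_range] at h1
      simpa [pa] using h1
    · intro I hI
      rw [Finset.mem_filter]
      constructor
      · refine Fintype.mem_piFinset.mpr fun p => ?_
        rw [Finset.mem_range]
        have := (I (ρ⁻¹ p.1, p.2)).isLt
        simpa [pa] using this
      · intro p
        have := (Finset.mem_filter.mp hI).2 (ρ⁻¹ p.1, p.2)
        simp only [pa, mul_inv_rev, Equiv.Perm.mul_apply] at this ⊢
        simpa using this
    · intro J hJ
      rw [Finset.mem_filter]
      refine ⟨Finset.mem_univ _, fun p => ?_⟩
      have := (Finset.mem_filter.mp hJ).2 (ρ p.1, p.2)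
      simp only [pa, mul_inv_rev, Equiv.Perm.mul_apply] at this ⊢
      simpa using this
    · intro I hI
      funext p
      ext
      show (pa n m ρ (fun q => ((I q : ℕ))) (ρ p.1, p.2)) = (I p : ℕ)
      show ((I (ρ⁻¹ (ρ p.1), p.2) : ℕ)) = (I p : ℕ)
      exact congrArg (fun x : Fin n × Fin m => ((I x : ℕ)))
        (by simp)
    · intro J hJ
      funext p
      simp [pa]
    · intro I hI
      rfl
  rw [hstep]
  refine Finset.sum_subset ?_ ?_
  · intro J hJ
    rw [Finset.mem_filter] at hJ
    refine Fintype.mem_piFinset.mpr fun p => ?_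
    have h1 := (Fintype.mem_piFinset.mp hJ.1) p
    rw [Finset.mem_range] at h1 ⊢
    have h2 : pa n m ρ b p ≤ ∑ q : Fin n × Fin m, (a q + b q) := by
      calc pa n m ρ b p ≤ a (ρ⁻¹ p.1, p.2) + b (ρ⁻¹ p.1, p.2) := by simp [pa]
      _ ≤ ∑ q : Fin n × Fin m, (a q + b q) :=
        Finset.single_le_sum (f := fun q => a q + b q) (fun _ _ => Nat.zero_le _)
          (Finset.mem_univ _)
    omega
  · intro J hJbox hJS
    refine FF_zero n m a b c d ρ τ J ?_
    by_contra hc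
    push_neg at hc
    refine hJS (Finset.mem_filter.mpr ⟨Fintype.mem_piFinset.mpr fun p => ?_, fun p => (hc p).2⟩)
    rw [Finset.mem_range]
    have := (hc p).1
    omega


lemma rhs_eq (a b c d : Fin n × Fin m → ℕ)
    (hab : ∀ i : Fin n, Even (∑ j : Fin m, (a (i, j) + b (i, j))))
    (hcd : ∀ i : Fin n, Even (∑ j : Fin m, (c (i, j) + d (i, j)))) :
    (Polynomial.C ((n.factorial : ℚ))⁻¹ •
        ∑ σ : Equiv.Perm (Fin n),
          ∑ I ∈ Finset.univ.filter
              (fun I : (p : Fin n × Fin m) → Fin (b p + 1) =>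
                ∀ p : Fin n × Fin m, (I p : ℕ) ≤ c (σ⁻¹ p.1, p.2)),
            (((∏ p : Fin n × Fin m,
                  (b p).choose (I p) * (c (σ⁻¹ p.1, p.2)).descFactorial (I p) : ℕ) :
                Polynomial ℚ) *
              Polynomial.X ^ (∑ p : Fin n × Fin m, (I p : ℕ))) •
              symW14 n m (xy14 n m
                (fun p => a p + c (σ⁻¹ p.1, p.2) - (I p : ℕ))
                (fun p => b p + d (σ⁻¹ p.1, p.2) - (I p : ℕ))))
      = (Polynomial.C ((n.factorial : ℚ))⁻¹ * Polynomial.C ((n.factorial : ℚ))⁻¹) •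
          ∑ σ : Equiv.Perm (Fin n), ∑ τ : Equiv.Perm (Fin n),
            ∑ J ∈ Fintype.piFinset
                (fun _ : Fin n × Fin m => Finset.range (∑ p : Fin n × Fin m, (a p + b p) + 1)),
              FF n m a b c d σ τ J := by
  rw [Finset.sum_congr rfl (fun σ _ => Finset.sum_congr rfl (fun I hI =>
    rhs_inner n m a b c d hab hcd σ I (Finset.mem_filter.mp hI).2))]
  rw [Finset.sum_congr rfl (fun σ _ => (Finset.smul_sum
    (r := Polynomial.C ((n.factorial : ℚ))⁻¹)).symm)]
  rw [← Finset.smul_sum, smul_smul]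
  refine congrArg _ ?_
  rw [Finset.sum_congr rfl (fun σ _ => Finset.sum_comm), Finset.sum_comm]
  refine Finset.sum_congr rfl fun ρ _ => ?_
  have h4 : (∑ σ : Equiv.Perm (Fin n),
        ∑ I ∈ Finset.univ.filter
            (fun I : (p : Fin n × Fin m) → Fin (b p + 1) =>
              ∀ p : Fin n × Fin m, (I p : ℕ) ≤ c (σ⁻¹ p.1, p.2)),
          FF n m a b c d ρ (ρ * σ) (pa n m ρ (fun p => (I p : ℕ))))
      = ∑ τ : Equiv.Perm (Fin n),
          ∑ I ∈ Finset.univ.filter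
              (fun I : (p : Fin n × Fin m) → Fin (b p + 1) =>
                ∀ p : Fin n × Fin m, (I p : ℕ) ≤ c ((ρ⁻¹ * τ)⁻¹ p.1, p.2)),
            FF n m a b c d ρ τ (pa n m ρ (fun p => (I p : ℕ))) := by
    refine Fintype.sum_equiv (Equiv.mulLeft ρ) _ _ fun σ => ?_
    have hσ : ρ⁻¹ * (Equiv.mulLeft ρ σ) = σ := by
      simp [Equiv.mulLeft]
    rw [show (Equiv.mulLeft ρ σ) = ρ * σ from rfl]
    rw [inv_mul_cancel_left]
  rw [h4]
  exact Finset.sum_congr rfl fun τ _ => inner_reindex n m a b c d ρ τ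

end Aux14

/-- Product rule for the algebra `QSym_{B_n}(m)` of quantum symmetric functions of type
`B_n`: on monomials whose blocks have even total degree, the `B_n` product rule coincides
with the `A_n` one:
`s_W(x^a y^b) ⋆ s_W(x^c y^d) = (1/n!) Σ_{σ,I} (∏ C(b,I)(σ(c))_I) ℏ^{|I|} s_W(x^{a+σ(c)-I} y^{b+σ(d)-I})`. -/
theorem statement14 (n m : ℕ) (hn : 1 ≤ n) (hm : 1 ≤ m)
    (a b c d : Fin n × Fin m → ℕ)
    (hab : ∀ i : Fin n, Even (∑ j : Fin m, (a (i, j) + b (i, j))))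
    (hcd : ∀ i : Fin n, Even (∑ j : Fin m, (c (i, j) + d (i, j)))) :
    star14 n m (symW14 n m (xy14 n m a b)) (symW14 n m (xy14 n m c d)) =
      Polynomial.C ((n.factorial : ℚ))⁻¹ •
        ∑ σ : Equiv.Perm (Fin n),
          ∑ I ∈ Finset.univ.filter
              (fun I : (p : Fin n × Fin m) → Fin (b p + 1) =>
                ∀ p : Fin n × Fin m, (I p : ℕ) ≤ c (σ⁻¹ p.1, p.2)),
            (((∏ p : Fin n × Fin m,
                  (b p).choose (I p) * (c (σ⁻¹ p.1, p.2)).descFactorial (I p) : ℕ) :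
                Polynomial ℚ) *
              Polynomial.X ^ (∑ p : Fin n × Fin m, (I p : ℕ))) •
              symW14 n m (xy14 n m
                (fun p => a p + c (σ⁻¹ p.1, p.2) - (I p : ℕ))
                (fun p => b p + d (σ⁻¹ p.1, p.2) - (I p : ℕ))) :=
  (Aux14.lhs_eq n m a b c d hab hcd).trans (Aux14.rhs_eq n m a b c d hab hcd).symm
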